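/- Let K be a field and let F: K^n → K^n be an invertible polynomial map. If the K-vector space ker jac(F − x) ∩ K^n = {v ∈ K^n : (jac(F − x))·v = 0} has dimension n − r, then there exists T ∈ GL_n(K) such that the polynomial map G := T^{-1} F(Tx) satisfies ker jac(G − x) ∩ K^n = {0}^r × K^{n−r}. Moreover G is invertible and the degree of its inverse equals the degree of the inverse of F. -/

import Mathlib

open MvPolynomial

/-- `G` is the inverse of the polynomial map `F` (composition in both orders is the
identity). -/
def IsPolyInverse {K : Type*} [CommSemiring K] {n : ℕ}
    (G F : Fin n → MvPolynomial (Fin n) K) : Prop :=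
  (∀ i, bind₁ F (G i) = X i) ∧ (∀ i, bind₁ G (F i) = X i)

/-- The `K`-vector space `ker jac H ∩ Kⁿ` of constant vectors `v ∈ Kⁿ` such that
`(jac H) · v = 0`. -/
noncomputable def kerJac {K : Type*} [Field K] {n : ℕ}
    (H : Fin n → MvPolynomial (Fin n) K) : Submodule K (Fin n → K) :=
  LinearMap.ker
    ((((Matrix.of fun i j => pderiv j (H i)).mulVecLin).restrictScalars K).comp
      ((Algebra.linearMap K (MvPolynomial (Fin n) K)).compLeft (Fin n)))

/-- The linear conjugate `T⁻¹ ∘ F ∘ T` of a polynomial map `F` by `T ∈ GLₙ(K)`. -/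
noncomputable def conjMap {K : Type*} [Field K] {n : ℕ}
    (T : Matrix (Fin n) (Fin n) K) (F : Fin n → MvPolynomial (Fin n) K) :
    Fin n → MvPolynomial (Fin n) K :=
  fun i => ∑ j, C (T⁻¹ i j) * bind₁ (fun k => ∑ l, C (T k l) * X l) (F j)

section Aux

variable {K : Type*} [Field K] {n : ℕ}

/-- The linear polynomial map of a matrix. -/
noncomputable def linPoly (M : Matrix (Fin n) (Fin n) K) : Fin n → MvPolynomial (Fin n) K :=
  fun i => ∑ j, C (M i j) * X j

lemma bind₁_linPoly (M : Matrix (Fin n) (Fin n) K) (P : Fin n → MvPolynomial (Fin n) K)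
    (i : Fin n) : bind₁ P (linPoly M i) = ∑ j, C (M i j) * P j := by
  simp [linPoly, algHom_C]

lemma linPoly_one (i : Fin n) : linPoly (1 : Matrix (Fin n) (Fin n) K) i = X i := by
  rw [linPoly, Finset.sum_eq_single i] <;> simp [Matrix.one_apply] <;> tauto

lemma bind₁_lin_lin (M N : Matrix (Fin n) (Fin n) K) (i : Fin n) :
    bind₁ (linPoly M) (linPoly N i) = linPoly (N * M) i := by
  rw [bind₁_linPoly, linPoly]
  simp only [linPoly, Finset.mul_sum, ← C_mul, Matrix.mul_apply]
  rw [Finset.sum_comm]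
  refine Finset.sum_congr rfl fun l _ => ?_
  rw [map_sum, Finset.sum_mul]
  exact Finset.sum_congr rfl fun j _ => by rw [C_mul, mul_assoc]

lemma totalDegree_bind₁_lin_le (M : Matrix (Fin n) (Fin n) K) (p : MvPolynomial (Fin n) K) :
    (bind₁ (linPoly M) p).totalDegree ≤ p.totalDegree := by
  conv_lhs => rw [p.as_sum]
  rw [map_sum]
  apply totalDegree_finsetSum_le
  intro s hs
  rw [bind₁_monomial]
  refine le_trans (totalDegree_mul _ _) ?_
  rw [totalDegree_C, zero_add]
  refine le_trans (totalDegree_finset_prod _ _) (le_trans ?_ (le_totalDegree hs))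
  rw [Finsupp.sum]
  refine le_trans (Finset.sum_le_sum (fun k _ => ?_)) le_rfl
  refine le_trans (totalDegree_pow _ _) ?_
  have : (linPoly M k).totalDegree ≤ 1 := by
    apply totalDegree_finsetSum_le
    intro j _
    refine le_trans (totalDegree_mul _ _) ?_
    refine le_trans (Nat.add_le_add (totalDegree_C (M k j)).le (totalDegree_X j).le) ?_
    simp
  calc s k * (linPoly M k).totalDegree ≤ s k * 1 := Nat.mul_le_mul_left _ this
    _ = s k := Nat.mul_one _

lemma pderiv_linPoly (M : Matrix (Fin n) (Fin n) K) (i m : Fin n) :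
    pderiv m (linPoly M i) = C (M i m) := by
  rw [linPoly, map_sum, Finset.sum_eq_single m]
  · simp
  · intro j _ hj; simp [pderiv_X_of_ne hj]
  · simp

lemma pderiv_bind₁_lin (M : Matrix (Fin n) (Fin n) K) (m : Fin n)
    (p : MvPolynomial (Fin n) K) :
    pderiv m (bind₁ (linPoly M) p) = ∑ k, C (M k m) * bind₁ (linPoly M) (pderiv k p) := by
  induction p using MvPolynomial.induction_on with
  | C a => simp [pderiv_C]
  | add p q hp hq => simp only [map_add, hp, hq, mul_add, Finset.sum_add_distrib]
  | mul_X p i hp =>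
    have key : ∀ k : Fin n, pderiv k (p * X i)
        = pderiv k p * X i + (if i = k then p else 0) := by
      intro k
      rw [pderiv_mul]
      by_cases h : i = k
      · subst h; simp
      · simp [pderiv_X_of_ne h, h]
    simp only [map_mul, bind₁_X_right, pderiv_mul, hp, pderiv_linPoly, key, map_add,
      apply_ite (bind₁ (linPoly M)), map_zero, mul_add, mul_ite, mul_zero,
      Finset.sum_add_distrib, Finset.sum_ite_eq, Finset.mem_univ, if_true]
    rw [Finset.sum_mul]
    congr 1
    · exact Finset.sum_congr rfl fun k _ => (mul_assoc _ _ _)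
    · ring

lemma bind₁_bind₁_linPoly {M N : Matrix (Fin n) (Fin n) K} (h : N * M = 1)
    (p : MvPolynomial (Fin n) K) :
    bind₁ (linPoly M) (bind₁ (linPoly N) p) = p := by
  rw [bind₁_bind₁]
  have hX : (fun i => bind₁ (linPoly M) (linPoly N i)) = (X : Fin n → MvPolynomial (Fin n) K) := by
    funext i; rw [bind₁_lin_lin, h, linPoly_one]
  rw [hX, bind₁_X_left]
  rfl

lemma mem_kerJac_iff (H : Fin n → MvPolynomial (Fin n) K) (v : Fin n → K) :
    v ∈ kerJac H ↔
      (Matrix.of fun i j => pderiv j (H i)).mulVec (fun j => C (v j)) = 0 := by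
  unfold kerJac
  rw [LinearMap.mem_ker]
  simp only [LinearMap.comp_apply, LinearMap.restrictScalars_apply, Matrix.mulVecLin_apply,
    LinearMap.compLeft_apply, Algebra.linearMap_apply, algebraMap_eq]
  rfl

lemma mem_kerJac_sub_iff (F : Fin n → MvPolynomial (Fin n) K) (w : Fin n → K) :
    w ∈ kerJac (fun i => F i - X i) ↔
      (Matrix.of fun i j => pderiv j (F i)).mulVec (fun j => C (w j))
        = fun j => C (w j) := by
  rw [mem_kerJac_iff]
  have h1 : (Matrix.of fun i j => pderiv j (F i - X i))
      = (Matrix.of fun i j => pderiv j (F i)) - 1 := by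
    ext i j
    simp only [Matrix.of_apply, map_sub, Matrix.sub_apply, Matrix.one_apply, pderiv_X]
    congr 1
    by_cases h : i = j
    · subst h; simp [Pi.single_apply]
    · simp [Pi.single_apply, h, Ne.symm h]
  rw [h1, Matrix.sub_mulVec, Matrix.one_mulVec, sub_eq_zero]

lemma mulVec_cancel {R : Type*} [CommRing R] {A B : Matrix (Fin n) (Fin n) R}
    (hAB : A * B = 1) (hBA : B * A = 1) (x y : Fin n → R) :
    A.mulVec x = y ↔ x = B.mulVec y := by
  constructor
  · rintro rfl; rw [Matrix.mulVec_mulVec, hBA, Matrix.one_mulVec]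
  · rintro rfl; rw [Matrix.mulVec_mulVec, hAB, Matrix.one_mulVec]

lemma mem_kerJac_conj (T : Matrix (Fin n) (Fin n) K) (hT : IsUnit T.det)
    (F : Fin n → MvPolynomial (Fin n) K) (v : Fin n → K) :
    v ∈ kerJac (fun i => conjMap T F i - X i) ↔
      T.mulVec v ∈ kerJac (fun i => F i - X i) := by
  have hST : T⁻¹ * T = 1 := Matrix.nonsing_inv_mul T hT
  have hTS : T * T⁻¹ = 1 := Matrix.mul_nonsing_inv T hT
  set S := T⁻¹ with hSdef
  set J : Matrix (Fin n) (Fin n) (MvPolynomial (Fin n) K) :=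
    Matrix.of fun k m => pderiv m (F k) with hJ
  -- Jacobian of the conjugate
  have hJconj : (Matrix.of fun i j => pderiv j (conjMap T F i))
      = (S.map C) * (J.map (bind₁ (linPoly T)) * (T.map C)) := by
    refine Matrix.ext fun i j => ?_
    rw [Matrix.mul_apply, Matrix.of_apply]
    show pderiv j (∑ k, C (S i k) * bind₁ (linPoly T) (F k)) = _
    rw [map_sum]
    refine Finset.sum_congr rfl fun k _ => ?_
    rw [pderiv_C_mul, pderiv_bind₁_lin, Matrix.map_apply, Matrix.mul_apply]
    congr 1
    refine Finset.sum_congr rfl fun m _ => ?_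
    exact mul_comm _ _
  have h1 : (S.map C) * (T.map C) = (1 : Matrix (Fin n) (Fin n) (MvPolynomial (Fin n) K)) := by
    rw [← Matrix.map_mul, hST]
    exact Matrix.map_one _ (map_zero C) (map_one C)
  have h2 : (T.map C) * (S.map C) = (1 : Matrix (Fin n) (Fin n) (MvPolynomial (Fin n) K)) := by
    rw [← Matrix.map_mul, hTS]
    exact Matrix.map_one _ (map_zero C) (map_one C)
  have hTv : (T.map C).mulVec (fun j => (C (v j) : MvPolynomial (Fin n) K))
      = fun m => (C (T.mulVec v m) : MvPolynomial (Fin n) K) := by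
    funext m
    exact (RingHom.map_mulVec C T v m).symm
  have hbTw : (J.map (bind₁ (linPoly T))).mulVec (fun m => C (T.mulVec v m))
      = fun k => bind₁ (linPoly T) ((J.mulVec (fun m => C (T.mulVec v m))) k) := by
    funext k
    show ∑ m, bind₁ (linPoly T) (J k m) * C (T.mulVec v m)
        = bind₁ (linPoly T) (∑ m, J k m * C (T.mulVec v m))
    rw [map_sum]
    refine Finset.sum_congr rfl fun m _ => ?_
    rw [map_mul, bind₁_C_right]
  rw [mem_kerJac_sub_iff, mem_kerJac_sub_iff, hJconj, ← Matrix.mulVec_mulVec,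
    mulVec_cancel h1 h2, ← Matrix.mulVec_mulVec, hTv, hbTw]
  have hinj : Function.Injective
      (bind₁ (linPoly T) : MvPolynomial (Fin n) K → MvPolynomial (Fin n) K) := by
    intro p q hpq
    have h' := congrArg (bind₁ (linPoly S)) hpq
    rwa [bind₁_bind₁_linPoly hTS, bind₁_bind₁_linPoly hTS] at h'
  constructor
  · intro h
    funext k
    have hk := congrFun h k
    refine hinj ?_
    rw [hk, bind₁_C_right]
  · intro h
    funext k
    rw [congrFun h k]
    exact bind₁_C_right _ _


lemma conjMap_apply (T : Matrix (Fin n) (Fin n) K) (F : Fin n → MvPolynomial (Fin n) K)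
    (i : Fin n) :
    conjMap T F i = bind₁ (fun k => bind₁ (linPoly T) (F k)) (linPoly T⁻¹ i) := by
  rw [bind₁_linPoly]; rfl

lemma bind₁_conjMap_linPoly {T : Matrix (Fin n) (Fin n) K} (hTS : T * T⁻¹ = 1)
    (F : Fin n → MvPolynomial (Fin n) K) (l : Fin n) :
    bind₁ (conjMap T F) (linPoly T l) = bind₁ (linPoly T) (F l) := by
  rw [bind₁_linPoly]
  calc ∑ j, C (T l j) * conjMap T F j
      = bind₁ (fun k => bind₁ (linPoly T) (F k)) (∑ j, C (T l j) * linPoly T⁻¹ j) := by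
        rw [map_sum]
        refine Finset.sum_congr rfl fun j _ => ?_
        rw [map_mul, bind₁_C_right, conjMap_apply]
    _ = bind₁ (fun k => bind₁ (linPoly T) (F k)) (bind₁ (linPoly T⁻¹) (linPoly T l)) := by
        rw [bind₁_linPoly]
    _ = bind₁ (fun k => bind₁ (linPoly T) (F k)) (X l) := by
        rw [bind₁_lin_lin, hTS, linPoly_one]
    _ = bind₁ (linPoly T) (F l) := bind₁_X_right _ _

lemma bind₁_conjMap_bind₁ {T : Matrix (Fin n) (Fin n) K} (hTS : T * T⁻¹ = 1)
    (F : Fin n → MvPolynomial (Fin n) K) (p : MvPolynomial (Fin n) K) :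
    bind₁ (conjMap T F) (bind₁ (linPoly T) p) = bind₁ (linPoly T) (bind₁ F p) := by
  rw [bind₁_bind₁, bind₁_bind₁]
  have e : (fun i => bind₁ (conjMap T F) (linPoly T i)) = fun i => bind₁ (linPoly T) (F i) :=
    by funext l; rw [bind₁_conjMap_linPoly hTS F l]
  rw [e]

lemma isPolyInverse_conjMap (T : Matrix (Fin n) (Fin n) K) (hT : IsUnit T.det)
    {F Finv : Fin n → MvPolynomial (Fin n) K} (h : IsPolyInverse Finv F) :
    IsPolyInverse (conjMap T Finv) (conjMap T F) := by
  have hST : T⁻¹ * T = 1 := Matrix.nonsing_inv_mul T hT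
  have hTS : T * T⁻¹ = 1 := Matrix.mul_nonsing_inv T hT
  have main : ∀ (A B : Fin n → MvPolynomial (Fin n) K), (∀ k, bind₁ A (B k) = X k) →
      ∀ i, bind₁ (conjMap T A) (conjMap T B i) = X i := by
    intro A B hAB i
    rw [conjMap_apply T B i, bind₁_bind₁]
    have e : (fun k => bind₁ (conjMap T A) (bind₁ (linPoly T) (B k))) = linPoly T := by
      funext k
      rw [bind₁_conjMap_bind₁ hTS, hAB, bind₁_X_right]
    rw [e, bind₁_lin_lin, hST, linPoly_one]
  exact ⟨main F Finv h.1, main Finv F h.2⟩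

lemma conjMap_conjMap_inv (T : Matrix (Fin n) (Fin n) K) (hT : IsUnit T.det)
    (G : Fin n → MvPolynomial (Fin n) K) :
    conjMap T⁻¹ (conjMap T G) = G := by
  have hST : T⁻¹ * T = 1 := Matrix.nonsing_inv_mul T hT
  have hTS : T * T⁻¹ = 1 := Matrix.mul_nonsing_inv T hT
  have hinv : T⁻¹⁻¹ = T := Matrix.nonsing_inv_nonsing_inv T hT
  funext i
  rw [conjMap_apply, hinv]
  have e : (fun k => bind₁ (linPoly T⁻¹) (conjMap T G k)) = fun k => bind₁ G (linPoly T⁻¹ k) := by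
    funext k
    rw [conjMap_apply, bind₁_bind₁]
    have e2 : (fun i => bind₁ (linPoly T⁻¹) (bind₁ (linPoly T) (G i))) = G :=
      by funext l; rw [bind₁_bind₁_linPoly hTS (G l)]
    rw [e2]
  rw [e, ← bind₁_bind₁, bind₁_lin_lin, hTS, linPoly_one, bind₁_X_right]

lemma sup_totalDegree_conjMap_le (T : Matrix (Fin n) (Fin n) K)
    (P : Fin n → MvPolynomial (Fin n) K) :
    (Finset.univ.sup fun i => (conjMap T P i).totalDegree)
      ≤ Finset.univ.sup fun i => (P i).totalDegree := by
  refine Finset.sup_le fun i _ => ?_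
  have e : conjMap T P i = ∑ j, C (T⁻¹ i j) * bind₁ (linPoly T) (P j) := rfl
  rw [e]
  refine totalDegree_finsetSum_le fun j _ => ?_
  refine le_trans (totalDegree_mul _ _) ?_
  rw [totalDegree_C, zero_add]
  refine le_trans (totalDegree_bind₁_lin_le T (P j)) ?_
  exact Finset.le_sup (f := fun i => (P i).totalDegree) (Finset.mem_univ j)

lemma sup_totalDegree_conjMap_eq (T : Matrix (Fin n) (Fin n) K) (hT : IsUnit T.det)
    (P : Fin n → MvPolynomial (Fin n) K) :
    (Finset.univ.sup fun i => (conjMap T P i).totalDegree)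
      = Finset.univ.sup fun i => (P i).totalDegree := by
  refine le_antisymm (sup_totalDegree_conjMap_le T P) ?_
  conv_lhs => rw [← conjMap_conjMap_inv T hT P]
  exact sup_totalDegree_conjMap_le T⁻¹ (conjMap T P)


lemma exists_matrix_mulVec_mem_iff (W : Submodule K (Fin n → K)) {r : ℕ}
    (hW : Module.finrank K W = n - r) :
    ∃ T : Matrix (Fin n) (Fin n) K, IsUnit T.det ∧
      ∀ v : Fin n → K, (T.mulVec v ∈ W ↔ ∀ i : Fin n, (i : ℕ) < r → v i = 0) := by
  have hfin : Module.finrank K (Fin n → K) = n := Module.finrank_fin_fun K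
  have hdn : Module.finrank K W ≤ n := by
    have h := W.finrank_le
    rwa [hfin] at h
  set d := Module.finrank K W with hd
  set r' := n - d with hr'
  obtain ⟨W', hcompl⟩ := Submodule.exists_isCompl W
  have hsum : Module.finrank K W' + Module.finrank K W = n := by
    rw [Submodule.finrank_add_eq_of_isCompl hcompl.symm, hfin]
  have hW' : Module.finrank K W' = r' := by omega
  have hr'd : r' + d = n := by omega
  let b1 : Module.Basis (Fin r') K W' := Module.finBasisOfFinrankEq K W' hW'
  let b2 : Module.Basis (Fin d) K W := Module.finBasis K W
  let ι : Fin r' ⊕ Fin d ≃ Fin n := finSumFinEquiv.trans (finCongr hr'd)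
  let e0 : (Fin n → K) ≃ₗ[K] (Fin r' → K) × (Fin d → K) :=
    (LinearEquiv.funCongrLeft K K ι).trans
      (LinearEquiv.sumArrowLequivProdArrow _ _ K K)
  let e : (Fin n → K) ≃ₗ[K] (Fin n → K) :=
    e0.trans ((b1.equivFun.symm.prodCongr b2.equivFun.symm).trans
      (Submodule.prodEquivOfIsCompl W' W hcompl.symm))
  have hiota : ∀ p : Fin r', ((ι (Sum.inl p) : Fin n) : ℕ) = (p : ℕ) := by
    intro p
    simp [ι, finSumFinEquiv]
  have key : ∀ v : Fin n → K, (e v ∈ W ↔ ∀ i : Fin n, (i : ℕ) < r → v i = 0) := by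
    intro v
    have hev : e v = (b1.equivFun.symm ((e0 v).1) : Fin n → K)
        + (b2.equivFun.symm ((e0 v).2) : Fin n → K) := rfl
    rw [hev]
    have hmem2 : (b2.equivFun.symm ((e0 v).2) : Fin n → K) ∈ W :=
      (b2.equivFun.symm ((e0 v).2)).2
    rw [Submodule.add_mem_iff_left W hmem2]
    have hmem1 : (b1.equivFun.symm ((e0 v).1) : Fin n → K) ∈ W' :=
      (b1.equivFun.symm ((e0 v).1)).2
    constructor
    · intro hmemW i hir
      have hz : (b1.equivFun.symm ((e0 v).1) : Fin n → K) = 0 :=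
        Submodule.disjoint_def.mp hcompl.disjoint _ hmemW hmem1
      have hz2 : b1.equivFun.symm ((e0 v).1) = 0 := Subtype.ext hz
      have hz3 : (e0 v).1 = 0 := by
        have h0 : b1.equivFun.symm (0 : Fin r' → K) = 0 := map_zero _
        exact b1.equivFun.symm.injective (hz2.trans h0.symm)
      have hir' : (i : ℕ) < r' := by omega
      have := congrFun hz3 ⟨(i : ℕ), hir'⟩
      simpa [e0, ι, LinearEquiv.funCongrLeft, Fin.ext_iff, hiota] using this
    · intro hv
      have hz3 : (e0 v).1 = 0 := by
        funext p
        have hpr : ((ι (Sum.inl p) : Fin n) : ℕ) < r := by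
          have := (ι (Sum.inl p)).isLt
          rw [hiota]
          have hp := p.isLt
          omega
        have := hv (ι (Sum.inl p)) hpr
        simpa [e0, LinearEquiv.funCongrLeft] using this
      have : b1.equivFun.symm ((e0 v).1) = 0 := by rw [hz3]; exact map_zero _
      rw [this]
      simpa using W.zero_mem
  refine ⟨LinearMap.toMatrix' e.toLinearMap, ?_, ?_⟩
  · apply Matrix.isUnit_det_of_right_inverse (B := LinearMap.toMatrix' e.symm.toLinearMap)
    rw [← LinearMap.toMatrix'_comp]
    have : (e.toLinearMap.comp e.symm.toLinearMap) = LinearMap.id :=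
      LinearMap.ext fun x => e.apply_symm_apply x
    rw [this, LinearMap.toMatrix'_id]
  · intro v
    have : (LinearMap.toMatrix' e.toLinearMap).mulVec v = e v := by
      rw [← Matrix.toLin'_apply, Matrix.toLin'_toMatrix']
      rfl
    rw [this]
    exact key v

end Aux

/-- If `F` is an invertible polynomial map and `ker jac(F - x) ∩ Kⁿ`
has dimension `n - r`, then there is `T ∈ GLₙ(K)` such that `G = T⁻¹ F(Tx)` satisfies
`ker jac(G - x) ∩ Kⁿ = {0}ʳ × K^{n-r}`; moreover `G` is invertible and the degree of
its inverse equals the degree of the inverse of `F`. -/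
theorem conjugate_kernel_normal_form
    {K : Type*} [Field K] {n r : ℕ}
    (F Finv : Fin n → MvPolynomial (Fin n) K)
    (hinv : IsPolyInverse Finv F)
    (hker : Module.finrank K (kerJac (fun i => F i - X i)) = n - r) :
    ∃ T : Matrix (Fin n) (Fin n) K, IsUnit T.det ∧
      (∀ v : Fin n → K,
        v ∈ kerJac (fun i => conjMap T F i - X i) ↔ ∀ i : Fin n, (i : ℕ) < r → v i = 0) ∧
      ∃ Ginv : Fin n → MvPolynomial (Fin n) K, IsPolyInverse Ginv (conjMap T F) ∧
        (Finset.univ.sup fun i => (Ginv i).totalDegree) =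
          (Finset.univ.sup fun i => (Finv i).totalDegree) := by
  obtain ⟨T, hdet, hprop⟩ := exists_matrix_mulVec_mem_iff (kerJac (fun i => F i - X i)) hker
  exact ⟨T, hdet, fun v => (mem_kerJac_conj T hdet F v).trans (hprop v),
    conjMap T Finv, isPolyInverse_conjMap T hdet hinv, sup_totalDegree_conjMap_eq T hdet Finv⟩
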